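/- The rings ℤ/2[X,Y]/(X³, Y², X² + XY) and ℤ/2[X,Y]/(X³, Y², XY) are not isomorphic. -/

import Mathlib

set_option synthInstance.maxHeartbeats 1000000
set_option maxHeartbeats 1000000

open MvPolynomial

namespace Stmt10Aux

abbrev K := ZMod 2 × ZMod 2 × ZMod 2 × ZMod 2

def addK : K → K → K
  | (a,b,c,d), (a',b',c',d') => (a+a', b+b', c+c', d+d')
def negK : K → K
  | (a,b,c,d) => (-a,-b,-c,-d)
def mulA : K → K → K
  | (a,b,c,d), (a',b',c',d') =>
    (a*a', a*b'+a'*b, a*c'+a'*c, a*d'+a'*d+b*b'+b*c'+b'*c)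
def mulB : K → K → K
  | (a,b,c,d), (a',b',c',d') =>
    (a*a', a*b'+a'*b, a*c'+a'*c, a*d'+a'*d+b*b')

lemma addK_assoc (u v w : K) : addK (addK u v) w = addK u (addK v w) := by
  obtain ⟨a,b,c,d⟩ := u; obtain ⟨a',b',c',d'⟩ := v; obtain ⟨a'',b'',c'',d''⟩ := w
  simp only [addK, Prod.mk.injEq]; exact ⟨by ring, by ring, by ring, by ring⟩
lemma zero_addK (u : K) : addK (0,0,0,0) u = u := by
  obtain ⟨a,b,c,d⟩ := u
  simp only [addK, Prod.mk.injEq]; exact ⟨by ring, by ring, by ring, by ring⟩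
lemma addK_zero (u : K) : addK u (0,0,0,0) = u := by
  obtain ⟨a,b,c,d⟩ := u
  simp only [addK, Prod.mk.injEq]; exact ⟨by ring, by ring, by ring, by ring⟩
lemma addK_comm (u v : K) : addK u v = addK v u := by
  obtain ⟨a,b,c,d⟩ := u; obtain ⟨a',b',c',d'⟩ := v
  simp only [addK, Prod.mk.injEq]; exact ⟨by ring, by ring, by ring, by ring⟩
lemma negK_addK (u : K) : addK (negK u) u = (0,0,0,0) := by
  obtain ⟨a,b,c,d⟩ := u
  simp only [addK, negK, Prod.mk.injEq]; exact ⟨by ring, by ring, by ring, by ring⟩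
lemma mulA_assoc (u v w : K) : mulA (mulA u v) w = mulA u (mulA v w) := by
  obtain ⟨a,b,c,d⟩ := u; obtain ⟨a',b',c',d'⟩ := v; obtain ⟨a'',b'',c'',d''⟩ := w
  simp only [mulA, Prod.mk.injEq]; exact ⟨by ring, by ring, by ring, by ring⟩
lemma one_mulA (u : K) : mulA (1,0,0,0) u = u := by
  obtain ⟨a,b,c,d⟩ := u
  simp only [mulA, Prod.mk.injEq]; exact ⟨by ring, by ring, by ring, by ring⟩
lemma mulA_one (u : K) : mulA u (1,0,0,0) = u := by
  obtain ⟨a,b,c,d⟩ := u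
  simp only [mulA, Prod.mk.injEq]; exact ⟨by ring, by ring, by ring, by ring⟩
lemma mulA_ldistrib (u v w : K) : mulA u (addK v w) = addK (mulA u v) (mulA u w) := by
  obtain ⟨a,b,c,d⟩ := u; obtain ⟨a',b',c',d'⟩ := v; obtain ⟨a'',b'',c'',d''⟩ := w
  simp only [mulA, addK, Prod.mk.injEq]; exact ⟨by ring, by ring, by ring, by ring⟩
lemma mulA_rdistrib (u v w : K) : mulA (addK u v) w = addK (mulA u w) (mulA v w) := by
  obtain ⟨a,b,c,d⟩ := u; obtain ⟨a',b',c',d'⟩ := v; obtain ⟨a'',b'',c'',d''⟩ := w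
  simp only [mulA, addK, Prod.mk.injEq]; exact ⟨by ring, by ring, by ring, by ring⟩
lemma mulA_comm (u v : K) : mulA u v = mulA v u := by
  obtain ⟨a,b,c,d⟩ := u; obtain ⟨a',b',c',d'⟩ := v
  simp only [mulA, Prod.mk.injEq]; exact ⟨by ring, by ring, by ring, by ring⟩
lemma zero_mulA (u : K) : mulA (0,0,0,0) u = (0,0,0,0) := by
  obtain ⟨a,b,c,d⟩ := u
  simp only [mulA, Prod.mk.injEq]; exact ⟨by ring, by ring, by ring, by ring⟩
lemma mulA_zero (u : K) : mulA u (0,0,0,0) = (0,0,0,0) := by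
  obtain ⟨a,b,c,d⟩ := u
  simp only [mulA, Prod.mk.injEq]; exact ⟨by ring, by ring, by ring, by ring⟩
lemma mulB_assoc (u v w : K) : mulB (mulB u v) w = mulB u (mulB v w) := by
  obtain ⟨a,b,c,d⟩ := u; obtain ⟨a',b',c',d'⟩ := v; obtain ⟨a'',b'',c'',d''⟩ := w
  simp only [mulB, Prod.mk.injEq]; exact ⟨by ring, by ring, by ring, by ring⟩
lemma one_mulB (u : K) : mulB (1,0,0,0) u = u := by
  obtain ⟨a,b,c,d⟩ := u
  simp only [mulB, Prod.mk.injEq]; exact ⟨by ring, by ring, by ring, by ring⟩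
lemma mulB_one (u : K) : mulB u (1,0,0,0) = u := by
  obtain ⟨a,b,c,d⟩ := u
  simp only [mulB, Prod.mk.injEq]; exact ⟨by ring, by ring, by ring, by ring⟩
lemma mulB_ldistrib (u v w : K) : mulB u (addK v w) = addK (mulB u v) (mulB u w) := by
  obtain ⟨a,b,c,d⟩ := u; obtain ⟨a',b',c',d'⟩ := v; obtain ⟨a'',b'',c'',d''⟩ := w
  simp only [mulB, addK, Prod.mk.injEq]; exact ⟨by ring, by ring, by ring, by ring⟩
lemma mulB_rdistrib (u v w : K) : mulB (addK u v) w = addK (mulB u w) (mulB v w) := by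
  obtain ⟨a,b,c,d⟩ := u; obtain ⟨a',b',c',d'⟩ := v; obtain ⟨a'',b'',c'',d''⟩ := w
  simp only [mulB, addK, Prod.mk.injEq]; exact ⟨by ring, by ring, by ring, by ring⟩
lemma mulB_comm (u v : K) : mulB u v = mulB v u := by
  obtain ⟨a,b,c,d⟩ := u; obtain ⟨a',b',c',d'⟩ := v
  simp only [mulB, Prod.mk.injEq]; exact ⟨by ring, by ring, by ring, by ring⟩
lemma zero_mulB (u : K) : mulB (0,0,0,0) u = (0,0,0,0) := by
  obtain ⟨a,b,c,d⟩ := u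
  simp only [mulB, Prod.mk.injEq]; exact ⟨by ring, by ring, by ring, by ring⟩
lemma mulB_zero (u : K) : mulB u (0,0,0,0) = (0,0,0,0) := by
  obtain ⟨a,b,c,d⟩ := u
  simp only [mulB, Prod.mk.injEq]; exact ⟨by ring, by ring, by ring, by ring⟩

def KA := K
def KB := K

instance : Zero KA := ⟨((0,0,0,0) : K)⟩
instance : One KA := ⟨((1,0,0,0) : K)⟩
instance : Add KA := ⟨addK⟩
instance : Neg KA := ⟨negK⟩
instance : Mul KA := ⟨mulA⟩
instance : Zero KB := ⟨((0,0,0,0) : K)⟩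
instance : One KB := ⟨((1,0,0,0) : K)⟩
instance : Add KB := ⟨addK⟩
instance : Neg KB := ⟨negK⟩
instance : Mul KB := ⟨mulB⟩

instance : CommRing KA where
  add_assoc := addK_assoc
  zero_add := zero_addK
  add_zero := addK_zero
  add_comm := addK_comm
  neg_add_cancel := negK_addK
  nsmul := nsmulRec
  zsmul := zsmulRec
  mul_assoc := mulA_assoc
  one_mul := one_mulA
  mul_one := mulA_one
  left_distrib := mulA_ldistrib
  right_distrib := mulA_rdistrib
  mul_comm := mulA_comm
  zero_mul := zero_mulA
  mul_zero := mulA_zero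

instance : CommRing KB where
  add_assoc := addK_assoc
  zero_add := zero_addK
  add_zero := addK_zero
  add_comm := addK_comm
  neg_add_cancel := negK_addK
  nsmul := nsmulRec
  zsmul := zsmulRec
  mul_assoc := mulB_assoc
  one_mul := one_mulB
  mul_one := mulB_one
  left_distrib := mulB_ldistrib
  right_distrib := mulB_rdistrib
  mul_comm := mulB_comm
  zero_mul := zero_mulB
  mul_zero := mulB_zero

lemma KA_mul_def (u v : KA) : u * v = mulA u v := rfl
lemma KA_add_def (u v : KA) : u + v = addK u v := rfl
lemma KA_zero_def : (0 : KA) = ((0,0,0,0) : K) := rfl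
lemma KA_one_def : (1 : KA) = ((1,0,0,0) : K) := rfl
lemma KB_mul_def (u v : KB) : u * v = mulB u v := rfl
lemma KB_add_def (u v : KB) : u + v = addK u v := rfl
lemma KB_zero_def : (0 : KB) = ((0,0,0,0) : K) := rfl
lemma KB_one_def : (1 : KB) = ((1,0,0,0) : K) := rfl

def toKA (u : K) : KA := u
def toKB (u : K) : KB := u
instance : DecidableEq KA := inferInstanceAs (DecidableEq K)
instance : DecidableEq KB := inferInstanceAs (DecidableEq K)

def fA : ZMod 2 →+* KA where
  toFun a := ((a, 0, 0, 0) : K)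
  map_one' := rfl
  map_mul' a b := by
    show ((a * b, 0, 0, 0) : K) = mulA (a, 0, 0, 0) (b, 0, 0, 0); simp [mulA]
    all_goals and_intros <;> ring
  map_zero' := rfl
  map_add' a b := by
    show ((a + b, 0, 0, 0) : K) = addK (a, 0, 0, 0) (b, 0, 0, 0); simp [addK]
    all_goals and_intros <;> ring

def fB : ZMod 2 →+* KB where
  toFun a := ((a, 0, 0, 0) : K)
  map_one' := rfl
  map_mul' a b := by
    show ((a * b, 0, 0, 0) : K) = mulB (a, 0, 0, 0) (b, 0, 0, 0); simp [mulB]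
    all_goals and_intros <;> ring
  map_zero' := rfl
  map_add' a b := by
    show ((a + b, 0, 0, 0) : K) = addK (a, 0, 0, 0) (b, 0, 0, 0); simp [addK]
    all_goals and_intros <;> ring

def xKA : KA := ((0,1,0,0) : K)
def yKA : KA := ((0,0,1,0) : K)
def xKB : KB := ((0,1,0,0) : K)
def yKB : KB := ((0,0,1,0) : K)

lemma fA_apply (a : ZMod 2) : fA a = ((a,0,0,0) : K) := rfl
lemma fB_apply (a : ZMod 2) : fB a = ((a,0,0,0) : K) := rfl

lemma comboKA (a b c d : ZMod 2) :
    fA a + fA b * xKA + fA c * yKA + fA d * xKA ^ 2 = toKA (a, b, c, d) := by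
  rw [sq]
  show addK (addK (addK (fA a) (mulA (fA b) xKA)) (mulA (fA c) yKA)) (mulA (fA d) (mulA xKA xKA)) = toKA (a, b, c, d)
  simp only [toKA, KA_mul_def, KA_add_def, fA_apply, xKA, yKA, mulA, addK, Prod.mk.injEq]
  all_goals and_intros <;> ring

lemma comboKB (a b c d : ZMod 2) :
    fB a + fB b * xKB + fB c * yKB + fB d * xKB ^ 2 = toKB (a, b, c, d) := by
  rw [sq]
  show addK (addK (addK (fB a) (mulB (fB b) xKB)) (mulB (fB c) yKB)) (mulB (fB d) (mulB xKB xKB)) = toKB (a, b, c, d)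
  simp only [toKB, KB_mul_def, KB_add_def, fB_apply, xKB, yKB, mulB, addK, Prod.mk.injEq]
  all_goals and_intros <;> ring

lemma extractKA (a b c d : ZMod 2) (h1 : toKA (a,b,c,d) * xKA = 0)
    (h2 : toKA (a,b,c,d) * yKA = 0) : a = 0 ∧ b = 0 ∧ c = 0 := by
  rw [KA_mul_def, KA_zero_def] at h1 h2
  have e1 : mulA (a,b,c,d) ((0,1,0,0) : K) = (0, a, 0, b + c) := by
    simp only [mulA, Prod.mk.injEq]
    all_goals and_intros <;> ring
  have e2 : mulA (a,b,c,d) ((0,0,1,0) : K) = (0, 0, a, b) := by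
    simp only [mulA, Prod.mk.injEq]
    all_goals and_intros <;> ring
  rw [show toKA (a,b,c,d) = ((a,b,c,d) : K) from rfl] at h1 h2
  rw [show (xKA : K) = ((0,1,0,0) : K) from rfl, e1] at h1
  rw [show (yKA : K) = ((0,0,1,0) : K) from rfl, e2] at h2
  have ha : a = 0 := congrArg (fun u : K => u.2.1) h1
  have hbc : b + c = 0 := congrArg (fun u : K => u.2.2.2) h1
  have hb : b = 0 := congrArg (fun u : K => u.2.2.2) h2
  refine ⟨ha, hb, ?_⟩
  rw [hb, zero_add] at hbc
  exact hbc

-- facts about KA / KB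
lemma one_ne_zero_KA : (1 : KA) ≠ 0 := by decide
lemma yKB_ne_zero : yKB ≠ 0 := by decide
lemma xKB_sq : xKB ^ 2 = toKB (0,0,0,1) := by
  rw [sq, KB_mul_def]; exact (by decide : mulB ((0,1,0,0) : K) (0,1,0,0) = (0,0,0,1))
lemma xKB_sq_ne_zero : xKB ^ 2 ≠ 0 := by
  rw [xKB_sq]; decide
lemma yKB_ne_xKB_sq : yKB ≠ xKB ^ 2 := by
  rw [xKB_sq]; decide

abbrev Rg := MvPolynomial (Fin 2) (ZMod 2)

lemma h2R : (2 : Rg) = 0 := by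
  rw [show (2:Rg) = C 2 from (map_ofNat C 2).symm, show (2:ZMod 2) = 0 by decide, map_zero]

noncomputable abbrev IA : Ideal Rg := Ideal.span {(X 0 : Rg) ^ 3, (X 1) ^ 2, (X 0) ^ 2 + X 0 * X 1}
noncomputable abbrev IB : Ideal Rg := Ideal.span {(X 0 : Rg) ^ 3, (X 1) ^ 2, X 0 * X 1}
noncomputable abbrev A := Rg ⧸ IA
noncomputable abbrev B := Rg ⧸ IB

noncomputable def xA : A := Ideal.Quotient.mk IA (X 0)
noncomputable def yA : A := Ideal.Quotient.mk IA (X 1)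
noncomputable def cA : ZMod 2 →+* A := (Ideal.Quotient.mk IA).comp C
noncomputable def xB : B := Ideal.Quotient.mk IB (X 0)
noncomputable def yB : B := Ideal.Quotient.mk IB (X 1)
noncomputable def cB : ZMod 2 →+* B := (Ideal.Quotient.mk IB).comp C

lemma hx3 : xA ^ 3 = 0 := by
  rw [xA, ← map_pow]
  exact Ideal.Quotient.eq_zero_iff_mem.mpr (Ideal.subset_span (by simp))
lemma hy2 : yA ^ 2 = 0 := by
  rw [yA, ← map_pow]
  exact Ideal.Quotient.eq_zero_iff_mem.mpr (Ideal.subset_span (by simp))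
lemma hg3 : xA ^ 2 + xA * yA = 0 := by
  rw [xA, yA, ← map_pow, ← map_mul, ← map_add]
  exact Ideal.Quotient.eq_zero_iff_mem.mpr (Ideal.subset_span (by simp))
lemma h2A : (2 : A) = 0 := by
  rw [show (2:A) = Ideal.Quotient.mk IA 2 from (map_ofNat _ 2).symm, h2R, map_zero]
lemma hxy : xA * yA = xA ^ 2 := by
  linear_combination (-1 : A) * hg3 + (xA * yA) * h2A
lemma hx2y : xA ^ 2 * yA = 0 := by linear_combination xA * hxy + hx3
lemma hx4 : xA ^ 4 = 0 := by linear_combination xA * hx3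

lemma hx3B : xB ^ 3 = 0 := by
  rw [xB, ← map_pow]
  exact Ideal.Quotient.eq_zero_iff_mem.mpr (Ideal.subset_span (by simp))
lemma hy2B : yB ^ 2 = 0 := by
  rw [yB, ← map_pow]
  exact Ideal.Quotient.eq_zero_iff_mem.mpr (Ideal.subset_span (by simp))
lemma hxyB : xB * yB = 0 := by
  rw [xB, yB, ← map_mul]
  exact Ideal.Quotient.eq_zero_iff_mem.mpr (Ideal.subset_span (by simp))
lemma hx2yB : xB ^ 2 * yB = 0 := by linear_combination xB * hxyB
lemma hx4B : xB ^ 4 = 0 := by linear_combination xB * hx3B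

lemma spanA (z : A) :
    ∃ a b c d : ZMod 2, z = cA a + cA b * xA + cA c * yA + cA d * xA ^ 2 := by
  obtain ⟨p, rfl⟩ := Ideal.Quotient.mk_surjective z
  induction p using MvPolynomial.induction_on with
  | C r => exact ⟨r, 0, 0, 0, by simp [cA]⟩
  | add p q hp hq =>
    obtain ⟨a, b, c, d, hp⟩ := hp
    obtain ⟨a', b', c', d', hq⟩ := hq
    exact ⟨a + a', b + b', c + c', d + d', by rw [map_add, hp, hq]; simp only [map_add]; ring⟩
  | mul_X p i hp =>
    obtain ⟨a, b, c, d, hp⟩ := hp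
    rw [map_mul, hp]
    fin_cases i
    · refine ⟨0, a, 0, b + c, ?_⟩
      show _ * xA = _
      simp only [map_add, map_zero, zero_mul, add_zero, zero_add]
      linear_combination cA c * hxy + cA d * hx3
    · refine ⟨0, 0, a, b, ?_⟩
      show _ * yA = _
      simp only [map_add, map_zero, zero_mul, add_zero, zero_add]
      linear_combination cA b * hxy + cA c * hy2 + cA d * hx2y

lemma spanB (z : B) :
    ∃ a b c d : ZMod 2, z = cB a + cB b * xB + cB c * yB + cB d * xB ^ 2 := by
  obtain ⟨p, rfl⟩ := Ideal.Quotient.mk_surjective z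
  induction p using MvPolynomial.induction_on with
  | C r => exact ⟨r, 0, 0, 0, by simp [cB]⟩
  | add p q hp hq =>
    obtain ⟨a, b, c, d, hp⟩ := hp
    obtain ⟨a', b', c', d', hq⟩ := hq
    exact ⟨a + a', b + b', c + c', d + d', by rw [map_add, hp, hq]; simp only [map_add]; ring⟩
  | mul_X p i hp =>
    obtain ⟨a, b, c, d, hp⟩ := hp
    rw [map_mul, hp]
    fin_cases i
    · refine ⟨0, a, 0, b, ?_⟩
      show _ * xB = _
      simp only [map_add, map_zero, zero_mul, add_zero, zero_add]
      linear_combination cB c * hxyB + cB d * hx3B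
    · refine ⟨0, 0, a, 0, ?_⟩
      show _ * yB = _
      simp only [map_add, map_zero, zero_mul, add_zero, zero_add]
      linear_combination cB b * hxyB + cB c * hy2B + cB d * hx2yB

-- homs to the concrete models
noncomputable def phiA' : Rg →+* KA := eval₂Hom fA ![xKA, yKA]
noncomputable def phiB' : Rg →+* KB := eval₂Hom fB ![xKB, yKB]

lemma phiA'_x : phiA' (X 0) = xKA := by simp [phiA']
lemma phiA'_y : phiA' (X 1) = yKA := by simp [phiA']
lemma phiB'_x : phiB' (X 0) = xKB := by simp [phiB']
lemma phiB'_y : phiB' (X 1) = yKB := by simp [phiB']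

lemma xKA_cube : xKA ^ 3 = 0 := by
  rw [pow_succ, sq, KA_mul_def, KA_mul_def]; exact (by decide : mulA (mulA ((0,1,0,0) : K) (0,1,0,0)) (0,1,0,0) = (0,0,0,0))
lemma yKA_sq : yKA ^ 2 = 0 := by
  rw [sq, KA_mul_def]; exact (by decide : mulA ((0,0,1,0) : K) (0,0,1,0) = (0,0,0,0))
lemma xKA_rel : xKA ^ 2 + xKA * yKA = 0 := by
  rw [sq, KA_mul_def, KA_mul_def]; exact (by decide : addK (mulA ((0,1,0,0) : K) (0,1,0,0)) (mulA ((0,1,0,0) : K) (0,0,1,0)) = (0,0,0,0))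
lemma xKB_cube : xKB ^ 3 = 0 := by
  rw [pow_succ, sq, KB_mul_def, KB_mul_def]; exact (by decide : mulB (mulB ((0,1,0,0) : K) (0,1,0,0)) (0,1,0,0) = (0,0,0,0))
lemma yKB_sq : yKB ^ 2 = 0 := by
  rw [sq, KB_mul_def]; exact (by decide : mulB ((0,0,1,0) : K) (0,0,1,0) = (0,0,0,0))
lemma xyKB : xKB * yKB = 0 := by
  rw [KB_mul_def]; exact (by decide : mulB ((0,1,0,0) : K) (0,0,1,0) = (0,0,0,0))

lemma phiA'_vanish : ∀ p ∈ ({(X 0 : Rg) ^ 3, (X 1) ^ 2, (X 0) ^ 2 + X 0 * X 1} : Set Rg),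
    phiA' p = 0 := by
  rintro p (rfl | rfl | rfl)
  · rw [map_pow, phiA'_x, xKA_cube]
  · rw [map_pow, phiA'_y, yKA_sq]
  · rw [map_add, map_pow, map_mul, phiA'_x, phiA'_y, xKA_rel]

lemma phiB'_vanish : ∀ p ∈ ({(X 0 : Rg) ^ 3, (X 1) ^ 2, X 0 * X 1} : Set Rg),
    phiB' p = 0 := by
  rintro p (rfl | rfl | rfl)
  · rw [map_pow, phiB'_x, xKB_cube]
  · rw [map_pow, phiB'_y, yKB_sq]
  · rw [map_mul, phiB'_x, phiB'_y, xyKB]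

noncomputable def phiA : A →+* KA :=
  Ideal.Quotient.lift IA phiA' (fun p hp =>
    RingHom.mem_ker.mp
      (Ideal.span_le.mpr (fun q hq => RingHom.mem_ker.mpr (phiA'_vanish q hq)) hp))

noncomputable def phiB : B →+* KB :=
  Ideal.Quotient.lift IB phiB' (fun p hp =>
    RingHom.mem_ker.mp
      (Ideal.span_le.mpr (fun q hq => RingHom.mem_ker.mpr (phiB'_vanish q hq)) hp))

lemma phiA_x : phiA xA = xKA := by rw [xA, phiA, Ideal.Quotient.lift_mk, phiA'_x]
lemma phiA_y : phiA yA = yKA := by rw [yA, phiA, Ideal.Quotient.lift_mk, phiA'_y]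
lemma phiA_c (a : ZMod 2) : phiA (cA a) = fA a := by
  rw [cA, RingHom.comp_apply, phiA, Ideal.Quotient.lift_mk]
  simp [phiA']
lemma phiB_y : phiB yB = yKB := by rw [yB, phiB, Ideal.Quotient.lift_mk, phiB'_y]
lemma phiB_x : phiB xB = xKB := by rw [xB, phiB, Ideal.Quotient.lift_mk, phiB'_x]

lemma phiA_combo (a b c d : ZMod 2) :
    phiA (cA a + cA b * xA + cA c * yA + cA d * xA ^ 2) = toKA (a,b,c,d) := by
  rw [map_add, map_add, map_add, map_mul, map_mul, map_mul, map_pow,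
    phiA_c, phiA_c, phiA_c, phiA_c, phiA_x, phiA_y, comboKA]

-- nonvanishing in the quotient rings
lemma one_ne_zero_A : (1 : A) ≠ 0 := fun h => by
  have := congrArg phiA h
  rw [map_one, map_zero] at this
  exact one_ne_zero_KA this
lemma yB_ne_zero : yB ≠ 0 := fun h => by
  have := congrArg phiB h
  rw [phiB_y, map_zero] at this
  exact yKB_ne_zero this
lemma xB_sq_ne_zero : xB ^ 2 ≠ 0 := fun h => by
  have := congrArg phiB h
  rw [map_pow, phiB_x, map_zero] at this
  exact xKB_sq_ne_zero this
lemma yB_ne_xB_sq : yB ≠ xB ^ 2 := fun h => by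
  have := congrArg phiB h
  rw [map_pow, phiB_x, phiB_y] at this
  exact yKB_ne_xKB_sq this

lemma not_isUnit_xA : ¬ IsUnit xA := fun h => by
  have h3 : IsUnit (xA ^ 3) := h.pow 3
  rw [hx3] at h3
  exact one_ne_zero_A (isUnit_zero_iff.mp h3).symm
lemma not_isUnit_yA : ¬ IsUnit yA := fun h => by
  have h3 : IsUnit (yA ^ 2) := h.pow 2
  rw [hy2] at h3
  exact one_ne_zero_A (isUnit_zero_iff.mp h3).symm

lemma zmod2_cases (a : ZMod 2) : a = 0 ∨ a = 1 := by
  revert a; decide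

/-- In `B`, every element annihilating all non-units kills things;
precisely: `yB` and `xB^2` annihilate every non-unit. -/
lemma annB (v : B) (hv : ¬ IsUnit v) : yB * v = 0 ∧ xB ^ 2 * v = 0 := by
  obtain ⟨a, b, c, d, rfl⟩ := spanB v
  rcases zmod2_cases a with rfl | rfl
  · constructor
    · simp only [map_zero, zero_add]
      linear_combination cB b * hxyB + cB c * hy2B + cB d * hx2yB
    · simp only [map_zero, zero_add]
      linear_combination cB b * hx3B + cB c * hx2yB + cB d * hx4B
  · exfalso
    apply hv
    refine IsUnit.of_mul_eq_one
      (cB 1 - cB b * xB - cB c * yB + cB (b * b - d) * xB ^ 2) ?_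
    simp only [map_one, map_sub, map_mul]
    linear_combination (-2 * cB b * cB c) * hxyB + (-(cB c)^2) * hy2B +
      ((cB b)^3 - 2 * cB b * cB d) * hx3B +
      ((cB c) * (cB b)^2 - 2 * cB c * cB d) * hx2yB +
      ((cB d) * (cB b)^2 - (cB d)^2) * hx4B

/-- In `A`, any nonzero element annihilating every non-unit equals `xA ^ 2`. -/
lemma annA (z : A) (hz : z ≠ 0) (h : ∀ w : A, ¬ IsUnit w → z * w = 0) : z = xA ^ 2 := by
  obtain ⟨a, b, c, d, rfl⟩ := spanA z
  have h1 := h xA not_isUnit_xA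
  have h2 := h yA not_isUnit_yA
  have k1 : toKA (a,b,c,d) * xKA = 0 := by
    have := congrArg phiA h1
    rw [map_mul, phiA_combo, phiA_x, map_zero] at this
    exact this
  have k2 : toKA (a,b,c,d) * yKA = 0 := by
    have := congrArg phiA h2
    rw [map_mul, phiA_combo, phiA_y, map_zero] at this
    exact this
  obtain ⟨ha, hb, hc⟩ := extractKA a b c d k1 k2
  subst ha hb hc
  rcases zmod2_cases d with rfl | rfl
  · exfalso; apply hz; simp
  · simp

end Stmt10Aux

open Stmt10Aux in
/-- The rings `ℤ/2[X,Y]/(X³, Y², X² + XY)` and `ℤ/2[X,Y]/(X³, Y², XY)` are not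
isomorphic. -/
theorem stmt10 :
    IsEmpty ((MvPolynomial (Fin 2) (ZMod 2) ⧸ Ideal.span
        {(X 0 : MvPolynomial (Fin 2) (ZMod 2)) ^ 3, (X 1) ^ 2, (X 0) ^ 2 + X 0 * X 1}) ≃+*
      (MvPolynomial (Fin 2) (ZMod 2) ⧸ Ideal.span
        {(X 0 : MvPolynomial (Fin 2) (ZMod 2)) ^ 3, (X 1) ^ 2, X 0 * X 1})) := by
  constructor
  intro e
  have e' : A ≃+* B := e
  have hz1 : e'.symm yB ≠ 0 := fun h => yB_ne_zero (by
    have := congrArg e' h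
    rwa [RingEquiv.apply_symm_apply, map_zero] at this)
  have hz2 : e'.symm (xB ^ 2) ≠ 0 := fun h => xB_sq_ne_zero (by
    have := congrArg e' h
    rwa [RingEquiv.apply_symm_apply, map_zero] at this)
  have hz12 : e'.symm yB ≠ e'.symm (xB ^ 2) := fun h => yB_ne_xB_sq (e'.symm.injective h)
  have key : ∀ w : A, ¬ IsUnit w → e'.symm yB * w = 0 ∧ e'.symm (xB ^ 2) * w = 0 := by
    intro w hw
    have hw' : ¬ IsUnit (e' w) := fun h => hw (by
      have := h.map e'.symm
      rwa [RingEquiv.symm_apply_apply] at this)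
    obtain ⟨k1, k2⟩ := annB (e' w) hw'
    constructor
    · have := congrArg e'.symm k1
      rwa [map_mul, RingEquiv.symm_apply_apply, map_zero] at this
    · have := congrArg e'.symm k2
      rwa [map_mul, RingEquiv.symm_apply_apply, map_zero] at this
  have hA1 : e'.symm yB = xA ^ 2 := annA _ hz1 (fun w hw => (key w hw).1)
  have hA2 : e'.symm (xB ^ 2) = xA ^ 2 := annA _ hz2 (fun w hw => (key w hw).2)
  exact hz12 (hA1.trans hA2.symm)
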